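/- Let T be a tree of diameter d and G a graph of girth greater than d. Then every subgraph of G that is a homomorphic copy of T is in fact isomorphic to T. Consequently, every T*-decomposition of G is a T-decomposition. -/
import Mathlib


/-- A loopless multigraph on vertex type `V` with edge type `E`. -/
structure Multigraph (V : Type) (E : Type) where
  ends : E → Sym2 V
  loopless : ∀ e, ¬ (ends e).IsDiag

namespace Multigraph

variable {V E : Type}

/-- Degree of a vertex. -/
noncomputable def deg (G : Multigraph V E) (v : V) : ℕ :=
  Nat.card {e : E // v ∈ G.ends e}

/-- Degree of a vertex in the spanning subgraph with edge set `H`. -/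
noncomputable def degOn (G : Multigraph V E) (H : Set E) (v : V) : ℕ :=
  Nat.card {e : E // e ∈ H ∧ v ∈ G.ends e}

/-- Degree of `v` in colour `j` under the edge-colouring `c`. -/
noncomputable def degCol {C : Type} (G : Multigraph V E) (c : E → C) (j : C) (v : V) : ℕ :=
  Nat.card {e : E // c e = j ∧ v ∈ G.ends e}

/-- Adjacency using only edges from `F`. -/
def Adj (G : Multigraph V E) (F : Set E) (v w : V) : Prop :=
  ∃ e ∈ F, G.ends e = s(v, w)

/-- The spanning subgraph with edge set `F` is connected (on all of `V`). -/
def ConnectedOn (G : Multigraph V E) (F : Set E) : Prop :=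
  ∀ v w : V, Relation.ReflTransGen (G.Adj F) v w

/-- `G` is connected. -/
def Connected (G : Multigraph V E) : Prop := G.ConnectedOn Set.univ

/-- `G` is `k`-edge-connected: removing fewer than `k` edges leaves it connected. -/
def EdgeConnected (G : Multigraph V E) (k : ℕ) : Prop :=
  ∀ F : Finset E, F.card < k → G.ConnectedOn {e | e ∉ F}

/-- The spanning subgraph with edge set `H` is `k`-edge-connected. -/
def EdgeConnectedOn (G : Multigraph V E) (H : Set E) (k : ℕ) : Prop :=
  ∀ F : Finset E, ↑F ⊆ H → F.card < k → G.ConnectedOn (H \ ↑F)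

/-- `S` is the edge set of a spanning tree of `G`. -/
def IsSpanningTree (G : Multigraph V E) (S : Set E) : Prop :=
  G.ConnectedOn S ∧ Nat.card S + 1 = Nat.card V

/-- `G` is a tree (connected with one fewer edge than vertices). -/
def IsTree (G : Multigraph V E) : Prop :=
  G.Connected ∧ Nat.card E + 1 = Nat.card V

/-- `H` is a homomorphic copy of `G`: it is obtained from `G` by identifying vertices,
keeping all edges (the vertex map is surjective and induces a bijection on edges). -/
def IsHomCopy {V' E' : Type} (G : Multigraph V E) (H : Multigraph V' E') : Prop :=
  ∃ (f : V → V') (g : E ≃ E'), Function.Surjective f ∧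
    ∀ e, H.ends (g e) = (G.ends e).map f

/-- `G` and `H` are isomorphic multigraphs. -/
def IsIsomorphic {V' E' : Type} (G : Multigraph V E) (H : Multigraph V' E') : Prop :=
  ∃ (f : V ≃ V') (g : E ≃ E'), ∀ e, H.ends (g e) = (G.ends e).map f

/-- The edge set `S` of `G` forms a subgraph which is a homomorphic copy of `T`. -/
def IsHomCopyOn {VT ET : Type} (T : Multigraph VT ET) (G : Multigraph V E) (S : Set E) : Prop :=
  ∃ (f : VT → V) (g : ET ≃ S), ∀ e, G.ends (g e) = (T.ends e).map f

/-- The edge set `S` of `G` forms a subgraph isomorphic to `T`. -/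
def IsIsoCopyOn {VT ET : Type} (T : Multigraph VT ET) (G : Multigraph V E) (S : Set E) : Prop :=
  ∃ (f : VT → V) (g : ET ≃ S), Function.Injective f ∧
    ∀ e, G.ends (g e) = (T.ends e).map f

/-- `A`, `B` form a bipartition of `G`. -/
def IsBipartition (G : Multigraph V E) (A B : Set V) : Prop :=
  Disjoint A B ∧ A ∪ B = Set.univ ∧ ∀ e : E, ∃ a ∈ A, ∃ b ∈ B, G.ends e = s(a, b)

/-- A `T*`-decomposition: a partition of the edge set of `G` into homomorphic copies of `T`. -/
def HomCopyDecomposition {VT ET : Type} (T : Multigraph VT ET) (G : Multigraph V E) : Prop :=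
  ∃ P : Set (Set E), Setoid.IsPartition P ∧ ∀ S ∈ P, T.IsHomCopyOn G S

/-- A `T`-decomposition: a partition of the edge set of `G` into copies isomorphic to `T`. -/
def IsoCopyDecomposition {VT ET : Type} (T : Multigraph VT ET) (G : Multigraph V E) : Prop :=
  ∃ P : Set (Set E), Setoid.IsPartition P ∧ ∀ S ∈ P, T.IsIsoCopyOn G S

/-- There is a walk of length `n` from `v` to `w` in `G`. -/
def WalkLen (G : Multigraph V E) (n : ℕ) (v w : V) : Prop :=
  ∃ (p : Fin (n + 1) → V) (e : Fin n → E), p 0 = v ∧ p (Fin.last n) = w ∧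
    ∀ i : Fin n, G.ends (e i) = s(p i.castSucc, p i.succ)

/-- Graph distance. -/
noncomputable def dist (G : Multigraph V E) (v w : V) : ℕ :=
  sInf {n | G.WalkLen n v w}

/-- Diameter of a finite graph. -/
noncomputable def diam (G : Multigraph V E) [Fintype V] : ℕ :=
  Finset.univ.sup fun p : V × V => G.dist p.1 p.2

/-- `G` contains a cycle of length `n`. -/
def HasCycleOfLength (G : Multigraph V E) (n : ℕ) : Prop :=
  2 ≤ n ∧ ∃ (v : ZMod n → V) (e : ZMod n → E), Function.Injective v ∧ Function.Injective e ∧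
    ∀ i, G.ends (e i) = s(v i, v (i + 1))

end Multigraph

namespace Multigraph

variable {V E : Type}

lemma walkLen_of_nat (G : Multigraph V E) {n : ℕ} {v w : V}
    (p : ℕ → V) (e : ℕ → E) (h0 : p 0 = v) (hn : p n = w)
    (he : ∀ i < n, G.ends (e i) = s(p i, p (i+1))) : G.WalkLen n v w := by
  refine ⟨fun i => p i, fun i => e i, ?_, ?_, fun i => ?_⟩
  · simpa using h0
  · simpa using hn
  · simpa using he i i.isLt

lemma walkLen_to_nat (G : Multigraph V E) {n : ℕ} {v w : V} (hn : 0 < n)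
    (h : G.WalkLen n v w) :
    ∃ (p : ℕ → V) (e : ℕ → E), p 0 = v ∧ p n = w ∧
      ∀ i < n, G.ends (e i) = s(p i, p (i+1)) := by
  obtain ⟨p, e, h0, hl, he⟩ := h
  refine ⟨fun i => p ⟨min i n, by omega⟩, fun i => e ⟨min i (n-1), by omega⟩, ?_, ?_, ?_⟩
  · show p ⟨min 0 n, by omega⟩ = v
    have h : (⟨min 0 n, by omega⟩ : Fin (n+1)) = 0 := by ext; simp
    rw [h]; exact h0
  · show p ⟨min n n, by omega⟩ = w
    have h : (⟨min n n, by omega⟩ : Fin (n+1)) = Fin.last n := by ext; simp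
    rw [h]; exact hl
  · intro i hi
    have h1 : min i n = i := by omega
    have h2 : min (i+1) n = i+1 := by omega
    have h3 : min i (n-1) = i := by omega
    simp only [h1, h2, h3]
    exact he ⟨i, hi⟩

lemma walkLen_zero (G : Multigraph V E) (v : V) : G.WalkLen 0 v v :=
  ⟨fun _ => v, Fin.elim0, rfl, rfl, fun i => i.elim0⟩

lemma walkLen_succ (G : Multigraph V E) {n : ℕ} {u w x : V}
    (h : G.WalkLen n u w) (e0 : E) (he0 : G.ends e0 = s(w, x)) :
    G.WalkLen (n+1) u x := by
  obtain ⟨p, e, h0, hl, he⟩ := h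
  apply walkLen_of_nat G (fun i => if h : i ≤ n then p ⟨i, by omega⟩ else x)
    (fun i => if h : i < n then e ⟨i, h⟩ else e0)
  · have : (⟨0, by omega⟩ : Fin (n+1)) = 0 := by ext; simp
    simp only [Nat.zero_le, dif_pos, this]; exact h0
  · simp
  · intro i hi
    by_cases hc : i < n
    · have h1 : i ≤ n := by omega
      have h2 : i + 1 ≤ n := by omega
      simp only [dif_pos hc, dif_pos h1, dif_pos h2]
      exact he ⟨i, hc⟩
    · have h1 : i = n := by omega
      rw [dif_neg hc, dif_pos (by omega : i ≤ n), dif_neg (by omega : ¬ i + 1 ≤ n)]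
      have h2 : (⟨i, by omega⟩ : Fin (n+1)) = Fin.last n := by ext; simp [h1]
      rw [h2, hl]
      exact he0

lemma exists_walk (G : Multigraph V E) {u v : V}
    (h : Relation.ReflTransGen (G.Adj Set.univ) u v) : ∃ n, G.WalkLen n u v := by
  induction h with
  | refl => exact ⟨0, walkLen_zero G u⟩
  | tail _ hadj ih =>
    obtain ⟨n, hw⟩ := ih
    obtain ⟨e0, _, he0⟩ := hadj
    exact ⟨n + 1, walkLen_succ G hw e0 he0⟩

end Multigraph

open Multigraph in
/-- if `T` is a tree of diameter `d` and `G` has girth greater than `d`,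
then every subgraph of `G` which is a homomorphic copy of `T` is isomorphic to `T`, and
consequently every `T*`-decomposition of `G` is a `T`-decomposition. -/
theorem homCopies_are_isoCopies_of_large_girth {VT ET V E : Type} [Fintype VT] [Fintype ET]
    (T : Multigraph VT ET) (G : Multigraph V E) (d : ℕ)
    (hT : T.IsTree) (hd : T.diam = d)
    (hgirth : ∀ n, n ≤ d → ¬ G.HasCycleOfLength n) :
    (∀ (S : Set E) (f : VT → V) (g : ET ≃ S),
        (∀ e, G.ends (g e) = (T.ends e).map f) → Function.Injective f) ∧
    (∀ P : Set (Set E), Setoid.IsPartition P →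
        (∀ S ∈ P, T.IsHomCopyOn G S) → ∀ S ∈ P, T.IsIsoCopyOn G S) := by
  have key : ∀ (S : Set E) (f : VT → V) (g : ET ≃ S),
      (∀ e, G.ends (g e) = (T.ends e).map f) → Function.Injective f := by
    intro S f g hends u v huv
    by_contra hne
    -- distance from u to v in T
    set n := T.dist u v with hn_def
    have hwne : {m | T.WalkLen m u v}.Nonempty := T.exists_walk (hT.1 u v)
    have hmem : T.WalkLen n u v := Nat.sInf_mem hwne
    have hnd : n ≤ d := by
      rw [← hd]
      exact Finset.le_sup (f := fun p : VT × VT => T.dist p.1 p.2) (Finset.mem_univ (u, v))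
    have hn1 : 0 < n := by
      rcases Nat.eq_zero_or_pos n with h0 | h0
      · exfalso
        rw [h0] at hmem
        obtain ⟨p, e, hp0, hpl, _⟩ := hmem
        apply hne
        rw [← hp0, ← hpl]
        congr 1
      · exact h0
    obtain ⟨p, e, hp0, hpn, hpe⟩ := T.walkLen_to_nat hn1 hmem
    -- the shortest walk has distinct vertices
    have hp_ne : ∀ a b, a ≤ n → b ≤ n → a < b → p a ≠ p b := by
      intro a b ha hb hab hpeq
      have hw : T.WalkLen (n - (b - a)) u v := by
        apply walkLen_of_nat T (fun k => if k ≤ a then p k else p (k + (b - a)))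
          (fun k => if k < a then e k else e (k + (b - a)))
        · simp [hp0]
        · by_cases hc : n - (b - a) ≤ a
          · have h1 : n = b := by omega
            have h2 : n - (b - a) = a := by omega
            rw [h1] at hpn
            rw [if_pos hc, h2, hpeq]; exact hpn
          · rw [if_neg hc]
            have h2 : n - (b - a) + (b - a) = n := by omega
            rw [h2]; exact hpn
        · intro k hk
          rcases lt_trichotomy k a with hka | hka | hka
          · rw [if_pos hka, if_pos (by omega : k ≤ a), if_pos (by omega : k + 1 ≤ a)]
            exact hpe k (by omega)
          · subst hka
            rw [if_neg (by omega : ¬ k < k), if_pos (le_refl k),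
              if_neg (by omega : ¬ k + 1 ≤ k)]
            have hb' : k + (b - k) = b := by omega
            have hb'' : k + 1 + (b - k) = b + 1 := by omega
            rw [hb', hb'', hpeq]
            exact hpe b (by omega)
          · rw [if_neg (by omega : ¬ k < a), if_neg (by omega : ¬ k ≤ a),
              if_neg (by omega : ¬ k + 1 ≤ a)]
            have h3 : k + 1 + (b - a) = k + (b - a) + 1 := by omega
            rw [h3]
            exact hpe (k + (b - a)) (by omega)
      have hle : T.dist u v ≤ n - (b - a) :=
        Nat.sInf_le (show (n - (b - a)) ∈ {m | T.WalkLen m u v} from hw)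
      rw [← hn_def] at hle
      omega
    have hp_inj : ∀ a b, a ≤ n → b ≤ n → p a = p b → a = b := by
      intro a b ha hb hpeq
      rcases lt_trichotomy a b with h | h | h
      · exact absurd hpeq (hp_ne a b ha hb h)
      · exact h
      · exact absurd hpeq.symm (hp_ne b a hb ha h)
    -- the image walk in G
    set q : ℕ → V := fun k => f (p k) with hq_def
    set ε : ℕ → E := fun k => (g (e k) : E) with hε_def
    have hq : ∀ k < n, G.ends (ε k) = s(q k, q (k+1)) := by
      intro k hk
      show G.ends (g (e k) : E) = _
      rw [hends (e k), hpe k hk, Sym2.map_pair_eq]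
    have hε_inj : ∀ a b, a < n → b < n → ε a = ε b → a = b := by
      intro a b ha hb hεeq
      have hg : g (e a) = g (e b) := Subtype.coe_injective hεeq
      have hee : e a = e b := g.injective hg
      have : s(p a, p (a+1)) = s(p b, p (b+1)) := by
        rw [← hpe a ha, ← hpe b hb, hee]
      rcases Sym2.eq_iff.mp this with ⟨h1, _⟩ | ⟨h1, h2⟩
      · have := hp_inj a b (by omega) (by omega) h1
        omega
      · have e1 := hp_inj a (b+1) (by omega) (by omega) h1
        have e2 := hp_inj (a+1) b (by omega) (by omega) h2
        omega
    have hclosed : q 0 = q n := by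
      show f (p 0) = f (p n)
      rw [hp0, hpn, huv]
    -- extract a cycle
    set Tset : Set ℕ := {t | 0 < t ∧ ∃ i, i + t ≤ n ∧ q i = q (i + t)} with hTset
    have hTne : Tset.Nonempty := ⟨n, hn1, 0, by omega, by simpa using hclosed⟩
    set m := sInf Tset with hm_def
    obtain ⟨hm1, i, him, hqi⟩ := Nat.sInf_mem hTne
    rw [← hm_def] at hm1 him hqi
    have hmn : m ≤ n := by omega
    have hmin : ∀ a b, i ≤ a → a < b → b < i + m → q a ≠ q b := by
      intro a b ha hab hb hqab
      have : b - a ∈ Tset := ⟨by omega, a, by omega, by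
        have : a + (b - a) = b := by omega
        rw [this]; exact hqab⟩
      have h2 := Nat.sInf_le this
      rw [← hm_def] at h2
      omega
    have hm2 : 2 ≤ m := by
      by_contra hc
      have hm1' : m = 1 := by omega
      apply G.loopless (ε i)
      rw [hq i (by omega)]
      rw [hm1'] at hqi
      rw [hqi.symm, Sym2.mk_isDiag_iff]
    haveI : NeZero m := ⟨by omega⟩
    apply hgirth m (le_trans hmn hnd)
    refine ⟨hm2, fun k => q (i + k.val), fun k => ε (i + k.val), ?_, ?_, ?_⟩
    · intro a b hab
      by_contra hne'
      have hav := ZMod.val_lt a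
      have hbv := ZMod.val_lt b
      have hvne : a.val ≠ b.val := fun h => hne' (ZMod.val_injective m h)
      rcases lt_or_gt_of_ne hvne with h | h
      · exact hmin (i + a.val) (i + b.val) (by omega) (by omega) (by omega) hab
      · exact hmin (i + b.val) (i + a.val) (by omega) (by omega) (by omega) hab.symm
    · intro a b hab
      have hav := ZMod.val_lt a
      have hbv := ZMod.val_lt b
      have := hε_inj (i + a.val) (i + b.val) (by omega) (by omega) hab
      exact ZMod.val_injective m (by omega)
    · intro k
      have hk : k.val < m := ZMod.val_lt k
      have hlt : i + k.val < n := by omega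
      rw [hq _ hlt]
      haveI : Fact (1 < m) := ⟨by omega⟩
      have hval : (k + 1).val = (k.val + 1) % m := by
        rw [ZMod.val_add, ZMod.val_one]
      have key2 : q (i + ZMod.val k + 1) = q (i + ZMod.val (k + 1)) := by
        by_cases hc : k.val + 1 < m
        · rw [show ZMod.val (k + 1) = k.val + 1 by rw [hval, Nat.mod_eq_of_lt hc], Nat.add_assoc]
        · have hkm : k.val + 1 = m := by omega
          rw [show ZMod.val (k + 1) = 0 by rw [hval, hkm, Nat.mod_self]]
          rw [show i + k.val + 1 = i + m by omega]
          simpa using hqi.symm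
      show s(q (i + ZMod.val k), q (i + ZMod.val k + 1))
          = s(q (i + ZMod.val k), q (i + ZMod.val (k + 1)))
      rw [key2]
  refine ⟨key, fun P hP hcopies S hS => ?_⟩
  obtain ⟨f, g, hends⟩ := hcopies S hS
  exact ⟨f, g, key S f g hends, hends⟩
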